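/- For all real numbers a, b, c with a ≥ 0, c > 0, and b > 0, we have exp((2ab + b²)/(2c)) ≤ 1 + ab/c + (b²/(2c))·((a+b)²/c + 1)·exp((2ab + b²)/(2c)). -/

import Mathlib

lemma exp_le_one_add_mul_exp (x : ℝ) : Real.exp x ≤ 1 + x * Real.exp x := by
  have h := Real.add_one_le_exp (-x)
  have hpos := Real.exp_pos x
  have : Real.exp (-x) * Real.exp x = 1 := by
    rw [← Real.exp_add]; simp
  nlinarith

lemma key_lemma (x : ℝ) (hx : 0 ≤ x) :
    Real.exp x ≤ 1 + x + x ^ 2 / 2 * Real.exp x := by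
  set f : ℝ → ℝ := fun x => 1 + x + x ^ 2 / 2 * Real.exp x - Real.exp x with hf
  have hderiv : ∀ y : ℝ, HasDerivAt f
      (1 + (2 * y ^ 1 / 2 * Real.exp y + y ^ 2 / 2 * Real.exp y) - Real.exp y) y := by
    intro y
    have h1 : HasDerivAt (fun y : ℝ => y ^ 2 / 2) (2 * y ^ 1 / 2) y :=
      (hasDerivAt_pow 2 y).div_const 2
    have h2 : HasDerivAt (fun y : ℝ => y ^ 2 / 2 * Real.exp y)
        (2 * y ^ 1 / 2 * Real.exp y + y ^ 2 / 2 * Real.exp y) y :=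
      h1.mul (Real.hasDerivAt_exp y)
    have h3 : HasDerivAt (fun y : ℝ => 1 + y) 1 y := by
      simpa using (hasDerivAt_id y).const_add 1
    exact (h3.add h2).sub (Real.hasDerivAt_exp y)
  have hmono : MonotoneOn f (Set.Ici (0 : ℝ)) := by
    apply monotoneOn_of_deriv_nonneg (convex_Ici 0)
    · exact Continuous.continuousOn (by fun_prop)
    · intro y _
      exact (hderiv y).differentiableAt.differentiableWithinAt
    · intro y hy
      rw [interior_Ici] at hy
      rw [(hderiv y).deriv]
      have hy0 : (0 : ℝ) ≤ y := le_of_lt hy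
      have h := exp_le_one_add_mul_exp y
      have hpos := (Real.exp_pos y).le
      nlinarith
  have h0 : f 0 = 0 := by simp [hf]
  have := hmono (Set.self_mem_Ici) (Set.mem_Ici.mpr hx) hx
  rw [h0] at this
  simp only [hf] at this
  linarith

theorem stmt_0 (a b c : ℝ) (ha : 0 ≤ a) (hc : 0 < c) (hb : 0 < b) :
    Real.exp ((2 * a * b + b ^ 2) / (2 * c)) ≤
      1 + a * b / c +
        b ^ 2 / (2 * c) * ((a + b) ^ 2 / c + 1) *
          Real.exp ((2 * a * b + b ^ 2) / (2 * c)) := by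
  set x : ℝ := (2 * a * b + b ^ 2) / (2 * c) with hx
  have hx0 : 0 ≤ x := by positivity
  have hkey := key_lemma x hx0
  have hE : 1 ≤ Real.exp x := Real.one_le_exp hx0
  set E := Real.exp x with hEdef
  have hEpos : 0 < E := Real.exp_pos x
  refine hkey.trans ?_
  rw [hx]
  have hc' : c ≠ 0 := ne_of_gt hc
  have h1 : ((2 * a * b + b ^ 2) / (2 * c)) ^ 2 / 2 = (2*a*b + b^2)^2 / (8 * c^2) := by
    field_simp; ring
  have h2 : (2*a*b+b^2)^2 ≤ 4 * (b^2 * (a+b)^2) := by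
    nlinarith [mul_nonneg (mul_nonneg ha hb.le) (mul_pos hb hb).le, pow_pos hb 4]
  have h3 : (2 * a * b + b ^ 2) / (2 * c) = a*b/c + b^2/(2*c) := by field_simp
  rw [h1, h3]
  have h4 : b ^ 2 / (2 * c) * ((a + b) ^ 2 / c + 1) * E
      = b^2 * (a+b)^2 / (2*c^2) * E + b^2/(2*c) * E := by field_simp
  rw [h4]
  have h5 : (2*a*b + b^2)^2 / (8 * c^2) ≤ b^2 * (a+b)^2 / (2*c^2) := by
    rw [div_le_div_iff₀ (by positivity) (by positivity)]
    nlinarith [mul_nonneg (mul_nonneg ha hb.le) (mul_pos hb hb).le, pow_pos hb 4, sq_nonneg c, mul_pos hc hc]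
  have h6 : (2*a*b + b^2)^2 / (8 * c^2) * E ≤ b^2 * (a+b)^2 / (2*c^2) * E :=
    mul_le_mul_of_nonneg_right h5 hEpos.le
  have h7 : b^2/(2*c) ≤ b^2/(2*c) * E := le_mul_of_one_le_right (by positivity) hE
  linarith
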